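/- For every t >= 5, if X1, ..., Xt are pairwise disjoint nonempty vertex subsets of CQ_3 whose union is the whole vertex set, then the sum over all pairs 1 <= i < j <= t of e(X_i, X_j) is at least 8. -/

import Mathlib

/-- Vertices of the 3-dimensional cubes: binary strings `x1x2x3` of length 3. -/
abbrev Vtx3 := Bool × Bool × Bool

/-- The 12 edges of the 3-dimensional crossed cube `CQ_3`. -/
def cq3EdgeList : List (Vtx3 × Vtx3) :=
  [ ((false,false,false),(false,false,true)),
    ((false,true,false),(false,true,true)),
    ((true,false,false),(true,false,true)),
    ((true,true,false),(true,true,true)),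
    ((false,false,false),(false,true,false)),
    ((false,false,true),(false,true,true)),
    ((true,false,false),(true,true,false)),
    ((true,false,true),(true,true,true)),
    ((false,false,false),(true,false,false)),
    ((false,true,false),(true,true,false)),
    ((false,false,true),(true,true,true)),
    ((false,true,true),(true,false,true)) ]

/-- The 3-dimensional crossed cube `CQ_3`. -/
def CQ3 : SimpleGraph Vtx3 where
  Adj u v := (u, v) ∈ cq3EdgeList ∨ (v, u) ∈ cq3EdgeList
  symm := ⟨fun _ _ h => Or.symm h⟩
  loopless := ⟨by
    intro x
    revert x
    decide⟩

instance : DecidableRel CQ3.Adj :=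
  fun u v => inferInstanceAs (Decidable ((u, v) ∈ cq3EdgeList ∨ (v, u) ∈ cq3EdgeList))

/-- `e(X, Y)`: the number of edges of `CQ_3` with one end in `X` and the
other end in `Y` (for disjoint `X`, `Y`). -/
def eXY (X Y : Finset Vtx3) : ℕ :=
  (Finset.univ.filter fun p : Vtx3 × Vtx3 => p.1 ∈ X ∧ p.2 ∈ Y ∧ CQ3.Adj p.1 p.2).card

set_option maxRecDepth 100000 in
set_option maxHeartbeats 4000000 in
lemma bnd_ge (X : Finset Vtx3) (h1 : X.Nonempty) (h2 : Xᶜ.Nonempty) : 3 ≤ eXY X Xᶜ := by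
  revert h1 h2; revert X; decide

lemma eXY_sum_indicator (X Y : Finset Vtx3) :
    eXY X Y = ∑ p : Vtx3 × Vtx3, if p.1 ∈ X ∧ p.2 ∈ Y ∧ CQ3.Adj p.1 p.2 then 1 else 0 := by
  rw [eXY, Finset.card_filter]

lemma eXY_comm (X Y : Finset Vtx3) : eXY X Y = eXY Y X := by
  rw [eXY_sum_indicator, eXY_sum_indicator]
  apply Fintype.sum_equiv (Equiv.prodComm Vtx3 Vtx3)
  intro p
  have h := CQ3.adj_comm p.1 p.2
  exact if_congr (by simp only [Equiv.prodComm_apply, Prod.fst_swap, Prod.snd_swap]; tauto) rfl rfl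

/-- For every `t ≥ 5`, any partition of `V(CQ_3)` into `t` pairwise disjoint
nonempty parts has total crossing count at least 8. -/
theorem cq3_many_parts (t : ℕ) (ht : 5 ≤ t) (X : Fin t → Finset Vtx3)
    (hdisj : ∀ i j, i ≠ j → Disjoint (X i) (X j))
    (hne : ∀ i, (X i).Nonempty)
    (hunion : Finset.univ.biUnion X = Finset.univ) :
    8 ≤ ∑ i : Fin t, ∑ j : Fin t, if i < j then eXY (X i) (X j) else 0 := by

  -- each vertex lies in exactly one part
  have hmem : ∀ v : Vtx3, ∃ i, v ∈ X i := by
    intro v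
    have : v ∈ Finset.univ.biUnion X := by rw [hunion]; exact Finset.mem_univ v
    simpa using this
  have huniq : ∀ v : Vtx3, ∀ i j, v ∈ X i → v ∈ X j → i = j := by
    intro v i j hi hj
    by_contra h
    exact absurd hj (Finset.disjoint_left.mp (hdisj i j h) hi)
  -- off-diagonal full sum equals sum of boundaries
  have key : ∀ i : Fin t,
      (∑ j : Fin t, if i ≠ j then eXY (X i) (X j) else 0) = eXY (X i) (X i)ᶜ := by
    intro i
    have : ∀ j, (if i ≠ j then eXY (X i) (X j) else 0)
        = ∑ p : Vtx3 × Vtx3, if i ≠ j ∧ p.1 ∈ X i ∧ p.2 ∈ X j ∧ CQ3.Adj p.1 p.2 then 1 else 0 := by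
      intro j
      by_cases h : i ≠ j
      · simp [h, eXY_sum_indicator]
      · simp [h]
    rw [Finset.sum_congr rfl (fun j _ => this j), Finset.sum_comm, eXY_sum_indicator]
    apply Finset.sum_congr rfl
    intro p _
    by_cases h1 : p.1 ∈ X i ∧ CQ3.Adj p.1 p.2
    · obtain ⟨k, hk⟩ := hmem p.2
      by_cases hki : k = i
      · subst hki
        have hr : ¬ (p.1 ∈ X k ∧ p.2 ∈ (X k)ᶜ ∧ CQ3.Adj p.1 p.2) := by
          rintro ⟨-, h2, -⟩; simp [Finset.mem_compl, hk] at h2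
        rw [if_neg hr]
        apply Finset.sum_eq_zero
        intro j _
        rw [if_neg]
        rintro ⟨hne', -, h2, -⟩
        exact hne' (huniq p.2 k j hk h2)
      · have hr : p.1 ∈ X i ∧ p.2 ∈ (X i)ᶜ ∧ CQ3.Adj p.1 p.2 := by
          refine ⟨h1.1, ?_, h1.2⟩
          simp only [Finset.mem_compl]
          intro hc
          exact hki (huniq p.2 k i hk hc)
        rw [if_pos hr]
        rw [Finset.sum_eq_single k]
        · simp [Ne.symm hki, hk, h1.1, h1.2]
        · intro j _ hj
          rw [if_neg]
          rintro ⟨-, -, h2, -⟩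
          exact hj (huniq p.2 j k h2 hk)
        · intro h; exact absurd (Finset.mem_univ k) h
    · have hr : ¬ (p.1 ∈ X i ∧ p.2 ∈ (X i)ᶜ ∧ CQ3.Adj p.1 p.2) := by
        rintro ⟨ha, -, hb⟩; exact h1 ⟨ha, hb⟩
      rw [if_neg hr]
      apply Finset.sum_eq_zero
      intro j _
      rw [if_neg]
      rintro ⟨-, ha, -, hb⟩
      exact h1 ⟨ha, hb⟩
  -- boundaries are at least 3
  have hbd : ∀ i : Fin t, 3 ≤ eXY (X i) (X i)ᶜ := by
    intro i
    apply bnd_ge _ (hne i)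
    have : Nontrivial (Fin t) := Fin.nontrivial_iff_two_le.mpr (by omega)
    obtain ⟨j, hj⟩ := exists_ne i
    obtain ⟨v, hv⟩ := hne j
    refine ⟨v, Finset.mem_compl.mpr fun hc => hj (huniq v j i hv hc)⟩
  -- total off-diagonal sum is twice the strict-order sum
  set S := ∑ i : Fin t, ∑ j : Fin t, if i < j then eXY (X i) (X j) else 0 with hS
  have hsplit : (∑ i : Fin t, ∑ j : Fin t, if i ≠ j then eXY (X i) (X j) else 0) = 2 * S := by
    have : ∀ i j : Fin t, (if i ≠ j then eXY (X i) (X j) else 0)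
        = (if i < j then eXY (X i) (X j) else 0) + (if j < i then eXY (X i) (X j) else 0) := by
      intro i j
      rcases lt_trichotomy i j with h | h | h
      · simp [h, h.ne, asymm h]
      · simp [h]
      · simp [h, h.ne', asymm h, (h.ne').symm]
    simp only [this, Finset.sum_add_distrib]
    have h2 : (∑ i : Fin t, ∑ j : Fin t, if j < i then eXY (X i) (X j) else 0) = S := by
      rw [Finset.sum_comm, hS]
      apply Finset.sum_congr rfl (fun i _ => Finset.sum_congr rfl (fun j _ => ?_))
      by_cases h : i < j
      · simp [h, eXY_comm]
      · simp [h]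
    rw [h2]; omega
  have htot : 15 ≤ ∑ i : Fin t, ∑ j : Fin t, if i ≠ j then eXY (X i) (X j) else 0 := by
    calc 15 ≤ 3 * t := by omega
    _ = ∑ _i : Fin t, 3 := by simp [Finset.sum_const, mul_comm]
    _ ≤ ∑ i : Fin t, eXY (X i) (X i)ᶜ := Finset.sum_le_sum fun i _ => hbd i
    _ = _ := by rw [Finset.sum_congr rfl fun i _ => (key i).symm]
  omega
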